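/- There exists a cake-division instance with n agents having identical subjective value density u (density 2 on [0, 1/2] and 0 on [1/2, 1]) and market density v ≡ 1 on [0,1], in which every allocation that is envy-free with respect to both the subjective utilities and the market valuation, and whose pieces are finite unions of intervals, uses at least 2n−2 cuts (i.e., consists of at least 2n−1 intervals in total). -/

import Mathlib

open MeasureTheory Set

/-- The piece of cake described by a finite set of closed intervals. -/
def pieceSet (P : Finset (ℝ × ℝ)) : Set ℝ := ⋃ p ∈ P, Set.Icc p.1 p.2

/-- In the instance where every agent's density is `2` on `[0,1/2]` and `0`
on `[1/2,1]` (so envy-freeness under `u` means equal measure of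
`A_i ∩ [0,1/2]`) and the market density is `1` on `[0,1]` (so envy-freeness
under `v` means equal measure of `A_i`), every allocation into finite unions
of intervals that is envy-free w.r.t. both valuations uses at least `2n-2`
cuts, i.e. consists of at least `2n-1` intervals in total. -/
theorem stmt_12 (n : ℕ) (hn : 0 < n) (P : Fin n → Finset (ℝ × ℝ))
    (hsub : ∀ i, pieceSet (P i) ⊆ Icc 0 1)
    (hcover : Icc (0 : ℝ) 1 ⊆ ⋃ i, pieceSet (P i))
    (hdisj : ∀ i j, i ≠ j → volume (pieceSet (P i) ∩ pieceSet (P j)) = 0)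
    (hEFu : ∀ i j, volume (pieceSet (P j) ∩ Icc 0 (1 / 2)) ≤
        volume (pieceSet (P i) ∩ Icc 0 (1 / 2)))
    (hEFv : ∀ i j, volume (pieceSet (P i)) = volume (pieceSet (P j))) :
    2 * n - 1 ≤ ∑ i, (P i).card := by
  classical
  set L : Set ℝ := Icc 0 (1/2) with hLdef
  set R : Set ℝ := Icc (1/2) 1 with hRdef
  -- positivity of left part
  have hapos : ∀ i, 0 < volume (pieceSet (P i) ∩ L) := by
    intro i
    rcases eq_zero_or_pos (volume (pieceSet (P i) ∩ L)) with h0 | h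
    · exfalso
      have hLsub : L ⊆ ⋃ j, (pieceSet (P j) ∩ L) := by
        intro x hx
        have hx1 : x ∈ Icc (0:ℝ) 1 := ⟨hx.1, hx.2.trans (by norm_num)⟩
        rcases mem_iUnion.mp (hcover hx1) with ⟨j, hj⟩
        exact mem_iUnion.mpr ⟨j, hj, hx⟩
      have h1 : volume L ≤ ∑' j, volume (pieceSet (P j) ∩ L) :=
        le_trans (measure_mono hLsub) (measure_iUnion_le _)
      have h2 : ∑' j : Fin n, volume (pieceSet (P j) ∩ L) = 0 := by
        rw [ENNReal.tsum_eq_zero]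
        intro j
        exact le_antisymm (h0 ▸ hEFu i j) zero_le
      rw [h2] at h1
      have hvL : volume L = ENNReal.ofReal (1/2) := by
        rw [hLdef, Real.volume_Icc]; norm_num
      rw [hvL] at h1
      simp [ENNReal.ofReal_eq_zero] at h1
    · exact h
  -- positivity of right part
  have hrpos : ∀ i, 0 < volume (pieceSet (P i) ∩ R) := by
    intro i
    rcases eq_zero_or_pos (volume (pieceSet (P i) ∩ R)) with h0 | h
    · exfalso
      -- m i ≤ a i
      have hmi : volume (pieceSet (P i)) ≤ volume (pieceSet (P i) ∩ L) := by
        have : pieceSet (P i) ⊆ (pieceSet (P i) ∩ L) ∪ (pieceSet (P i) ∩ R) := by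
          intro x hx
          have hx1 := hsub i hx
          rcases le_total x (1/2) with hle | hle
          · exact Or.inl ⟨hx, hx1.1, hle⟩
          · exact Or.inr ⟨hx, hle, hx1.2⟩
        calc volume (pieceSet (P i)) ≤ _ := measure_mono this
          _ ≤ volume (pieceSet (P i) ∩ L) + volume (pieceSet (P i) ∩ R) :=
              measure_union_le _ _
          _ = volume (pieceSet (P i) ∩ L) := by rw [h0, add_zero]
      -- 1 ≤ ∑ m j
      have hcov1 : (1:ENNReal) ≤ ∑' j : Fin n, volume (pieceSet (P j)) := by
        have h1 : volume (Icc (0:ℝ) 1) ≤ ∑' j, volume (pieceSet (P j)) :=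
          le_trans (measure_mono hcover) (measure_iUnion_le _)
        rwa [Real.volume_Icc, show (1:ℝ) - 0 = 1 by ring, ENNReal.ofReal_one] at h1
      -- ∑ a j ≤ 1/2
      have hsumL : ∑' j : Fin n, volume (pieceSet (P j) ∩ L) ≤ ENNReal.ofReal (1/2) := by
        have hae : Pairwise (Function.onFun (AEDisjoint volume) fun j => pieceSet (P j) ∩ L) := by
          intro j k hjk
          exact measure_mono_null (by intro x hx; exact ⟨hx.1.1, hx.2.1⟩) (hdisj j k hjk)
        have hnm : ∀ j, NullMeasurableSet (pieceSet (P j) ∩ L) volume := by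
          intro j
          exact (((P j).measurableSet_biUnion fun p _ => measurableSet_Icc).inter
            measurableSet_Icc).nullMeasurableSet
        rw [← measure_iUnion₀ hae hnm]
        have : (⋃ j, pieceSet (P j) ∩ L) ⊆ L := by
          intro x hx; rcases mem_iUnion.mp hx with ⟨j, hj⟩; exact hj.2
        calc volume (⋃ j, pieceSet (P j) ∩ L) ≤ volume L := measure_mono this
          _ = ENNReal.ofReal (1/2) := by rw [hLdef, Real.volume_Icc]; norm_num
      -- m j = m i ≤ a i = a j, so ∑ m ≤ ∑ a
      have hmono : ∑' j : Fin n, volume (pieceSet (P j)) ≤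
          ∑' j : Fin n, volume (pieceSet (P j) ∩ L) := by
        apply ENNReal.tsum_le_tsum
        intro j
        calc volume (pieceSet (P j)) = volume (pieceSet (P i)) := hEFv j i
          _ ≤ volume (pieceSet (P i) ∩ L) := hmi
          _ ≤ volume (pieceSet (P j) ∩ L) := hEFu j i
      have : (1:ENNReal) ≤ ENNReal.ofReal (1/2) := le_trans hcov1 (le_trans hmono hsumL)
      have h2 : ENNReal.ofReal (1/2 : ℝ) < 1 := by
        rw [ENNReal.ofReal_lt_one]; norm_num
      exact absurd (lt_of_lt_of_le h2 this) (lt_irrefl _)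
    · exact h
  -- existence of an interval with positive left (resp. right) part
  have hexL : ∀ i, ∃ p ∈ P i, 0 < volume (Icc p.1 p.2 ∩ L) := by
    intro i
    by_contra hc
    push_neg at hc
    have h0 : volume (pieceSet (P i) ∩ L) = 0 := by
      have heq : pieceSet (P i) ∩ L = ⋃ p ∈ P i, (Icc p.1 p.2 ∩ L) := by
        rw [pieceSet, iUnion₂_inter]
      rw [heq]
      refine le_antisymm (le_trans (measure_biUnion_finset_le _ _) ?_) zero_le
      refine le_of_eq (Finset.sum_eq_zero fun p hp => ?_)
      exact le_antisymm (hc p hp) zero_le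
    exact absurd h0 (hapos i).ne'
  have hexR : ∀ i, ∃ p ∈ P i, 0 < volume (Icc p.1 p.2 ∩ R) := by
    intro i
    by_contra hc
    push_neg at hc
    have h0 : volume (pieceSet (P i) ∩ R) = 0 := by
      have heq : pieceSet (P i) ∩ R = ⋃ p ∈ P i, (Icc p.1 p.2 ∩ R) := by
        rw [pieceSet, iUnion₂_inter]
      rw [heq]
      refine le_antisymm (le_trans (measure_biUnion_finset_le _ _) ?_) zero_le
      refine le_of_eq (Finset.sum_eq_zero fun p hp => ?_)
      exact le_antisymm (hc p hp) zero_le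
    exact absurd h0 (hrpos i).ne'
  -- straddling
  set Str : Fin n → Prop := fun i => ∃ p ∈ P i,
      0 < volume (Icc p.1 p.2 ∩ L) ∧ 0 < volume (Icc p.1 p.2 ∩ R) with hStr
  have hposL : ∀ a b : ℝ, 0 < volume (Icc a b ∩ L) → a < 1/2 ∧ a < b := by
    intro a b h
    rw [hLdef, Icc_inter_Icc, Real.volume_Icc, ENNReal.ofReal_pos, sub_pos] at h
    constructor
    · calc a ≤ a ⊔ 0 := le_sup_left
        _ < b ⊓ (1/2) := h
        _ ≤ 1/2 := inf_le_right
    · calc a ≤ a ⊔ 0 := le_sup_left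
        _ < b ⊓ (1/2) := h
        _ ≤ b := inf_le_left
  have hposR : ∀ a b : ℝ, 0 < volume (Icc a b ∩ R) → 1/2 < b := by
    intro a b h
    rw [hRdef, Icc_inter_Icc, Real.volume_Icc, ENNReal.ofReal_pos, sub_pos] at h
    calc (1/2:ℝ) ≤ a ⊔ (1/2) := le_sup_right
      _ < b ⊓ 1 := h
      _ ≤ b := inf_le_left
  have hStrUnique : ∀ i j, Str i → Str j → i = j := by
    intro i j hi hj
    by_contra hij
    rcases hi with ⟨p, hp, hpL, hpR⟩
    rcases hj with ⟨q, hq, hqL, hqR⟩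
    have h1 : p.1 < 1/2 := (hposL _ _ hpL).1
    have h2 : (1/2:ℝ) < p.2 := hposR _ _ hpR
    have h3 : q.1 < 1/2 := (hposL _ _ hqL).1
    have h4 : (1/2:ℝ) < q.2 := hposR _ _ hqR
    have hsubij : Icc p.1 p.2 ∩ Icc q.1 q.2 ⊆ pieceSet (P i) ∩ pieceSet (P j) := by
      intro x hx
      exact ⟨mem_biUnion hp hx.1, mem_biUnion hq hx.2⟩
    have hvol : 0 < volume (Icc p.1 p.2 ∩ Icc q.1 q.2) := by
      rw [Icc_inter_Icc, Real.volume_Icc, ENNReal.ofReal_pos, sub_pos]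
      calc p.1 ⊔ q.1 < 1/2 := sup_lt_iff.mpr ⟨h1, h3⟩
        _ < p.2 ⊓ q.2 := lt_inf_iff.mpr ⟨h2, h4⟩
    have := measure_mono_null hsubij (hdisj i j hij)
    rw [this] at hvol
    exact lt_irrefl _ hvol
  -- non-straddling pieces have at least 2 intervals
  have hcard : ∀ i, (if Str i then 1 else 2) ≤ (P i).card := by
    intro i
    by_cases hS : Str i
    · rcases hexL i with ⟨p, hp, _⟩
      simp only [hS, if_true]
      exact Finset.card_pos.mpr ⟨p, hp⟩
    · rcases hexL i with ⟨p, hp, hpL⟩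
      rcases hexR i with ⟨q, hq, hqR⟩
      have hpq : p ≠ q := by
        intro h
        exact hS ⟨p, hp, hpL, h ▸ hqR⟩
      simp only [hS, if_false]
      have : ({p, q} : Finset (ℝ × ℝ)) ⊆ P i := by
        intro x hx
        rcases Finset.mem_insert.mp hx with h | h
        · exact h ▸ hp
        · exact (Finset.mem_singleton.mp h) ▸ hq
      calc 2 = ({p, q} : Finset (ℝ × ℝ)).card := (Finset.card_pair hpq).symm
        _ ≤ (P i).card := Finset.card_le_card this
  -- counting
  have hT : (Finset.univ.filter Str).card ≤ 1 := by
    rw [Finset.card_le_one]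
    intro a ha b hb
    exact hStrUnique a b (Finset.mem_filter.mp ha).2 (Finset.mem_filter.mp hb).2
  have hkey : 2 * n ≤ (∑ i, (P i).card) + 1 := by
    calc 2 * n = ∑ _i : Fin n, 2 := by simp [Finset.sum_const, mul_comm]
      _ ≤ ∑ i, ((if Str i then 1 else 2) + (if Str i then 1 else 0)) := by
          apply Finset.sum_le_sum
          intro i _
          by_cases hS : Str i <;> simp [hS]
      _ = (∑ i, (if Str i then 1 else 2)) + (∑ i, (if Str i then 1 else 0)) :=
          Finset.sum_add_distrib
      _ ≤ (∑ i, (P i).card) + 1 := by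
          apply add_le_add
          · exact Finset.sum_le_sum fun i _ => hcard i
          · rw [Finset.sum_boole]
            exact_mod_cast hT
  omega
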